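/- Let n ≥ 1, let M : Fin n → Fin n → ℝ be a payoff matrix, let ς be a mixed strategy over n actions, let γ ≥ 0, and let 0 ≤ ε ≤ 1/n. Then the risk-averse best-response set BR(ς) = { σ ∈ Δ_ε(n) : r(σ, ς, M) ≥ r(σ', ς, M) for all σ' ∈ Δ_ε(n) } is a convex subset of ℝ^n. -/
import Mathlib


open Finset

noncomputable section

/-- The ε-constrained simplex: vectors with all coordinates ≥ ε summing to 1. -/
def simplexEps (m : ℕ) (ε : ℝ) : Set (Fin m → ℝ) :=
  {σ | (∀ i, ε ≤ σ i) ∧ ∑ i, σ i = 1}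

/-- Expected utility u(σ, ς, M). -/
def expUtil {m k : ℕ} (σ : Fin m → ℝ) (ς : Fin k → ℝ) (M : Fin m → Fin k → ℝ) : ℝ :=
  ∑ j, ∑ i, σ j * ς i * M j i

/-- Expected payoff of own action j against opponent mixed strategy ς: M̄ j. -/
def meanPay {m k : ℕ} (ς : Fin k → ℝ) (M : Fin m → Fin k → ℝ) (j : Fin m) : ℝ :=
  ∑ i, ς i * M j i

/-- Entries of the ς-weighted covariance matrix Σ_{M,ς}. -/
def covEnt {m k : ℕ} (ς : Fin k → ℝ) (M : Fin m → Fin k → ℝ) (j j' : Fin m) : ℝ :=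
  ∑ i, ς i * (M j i - meanPay ς M j) * (M j' i - meanPay ς M j')

/-- Utility variance Var(σ, ς, M) = σᵀ Σ_{M,ς} σ. -/
def utilVar {m k : ℕ} (σ : Fin m → ℝ) (ς : Fin k → ℝ) (M : Fin m → Fin k → ℝ) : ℝ :=
  ∑ j, ∑ j', σ j * σ j' * covEnt ς M j j'

/-- Total utility r(σ, ς, M) = u(σ, ς, M) − γ · Var(σ, ς, M). -/
def totalUtil {m k : ℕ} (γ : ℝ) (σ : Fin m → ℝ) (ς : Fin k → ℝ)
    (M : Fin m → Fin k → ℝ) : ℝ :=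
  expUtil σ ς M - γ * utilVar σ ς M

lemma utilVar_eq {m k : ℕ} (σ : Fin m → ℝ) (ς : Fin k → ℝ) (M : Fin m → Fin k → ℝ) :
    utilVar σ ς M = ∑ i, ς i * (∑ j, σ j * (M j i - meanPay ς M j))^2 := by
  unfold utilVar covEnt
  have h : ∀ i, ς i * (∑ j, σ j * (M j i - meanPay ς M j))^2
      = ∑ j, ∑ j', σ j * σ j' * (ς i * (M j i - meanPay ς M j) * (M j' i - meanPay ς M j')) := by
    intro i
    rw [sq, Finset.sum_mul_sum, Finset.mul_sum]
    refine Finset.sum_congr rfl fun j _ => ?_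
    rw [Finset.mul_sum]
    exact Finset.sum_congr rfl fun j' _ => by ring
  simp only [h, Finset.mul_sum]
  rw [Finset.sum_comm (s := (univ : Finset (Fin k))) (t := (univ : Finset (Fin m)))
    (f := fun i j => ∑ j', σ j * σ j' * (ς i * (M j i - meanPay ς M j) * (M j' i - meanPay ς M j')))]
  exact Finset.sum_congr rfl fun j _ => Finset.sum_comm

lemma expUtil_combo {m k : ℕ} (σ τ : Fin m → ℝ) (ς : Fin k → ℝ) (M : Fin m → Fin k → ℝ)
    (a b : ℝ) :
    expUtil (a • σ + b • τ) ς M = a * expUtil σ ς M + b * expUtil τ ς M := by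
  simp only [expUtil, Pi.add_apply, Pi.smul_apply, smul_eq_mul, Finset.mul_sum,
    ← Finset.sum_add_distrib]
  exact Finset.sum_congr rfl fun j _ => Finset.sum_congr rfl fun i _ => by ring

lemma utilVar_combo_le {m k : ℕ} (σ τ : Fin m → ℝ) (ς : Fin k → ℝ) (M : Fin m → Fin k → ℝ)
    (hς₀ : ∀ i, 0 ≤ ς i) (a b : ℝ) (ha : 0 ≤ a) (hb : 0 ≤ b) (hab : a + b = 1) :
    utilVar (a • σ + b • τ) ς M ≤ a * utilVar σ ς M + b * utilVar τ ς M := by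
  simp only [utilVar_eq, Finset.mul_sum, ← Finset.sum_add_distrib]
  refine Finset.sum_le_sum fun i _ => ?_
  have hc : (∑ j, (a • σ + b • τ) j * (M j i - meanPay ς M j))
      = a * (∑ j, σ j * (M j i - meanPay ς M j)) + b * (∑ j, τ j * (M j i - meanPay ς M j)) := by
    simp only [Pi.add_apply, Pi.smul_apply, smul_eq_mul, Finset.mul_sum,
      ← Finset.sum_add_distrib]
    exact Finset.sum_congr rfl fun j _ => by ring
  rw [hc]
  set u := ∑ j, σ j * (M j i - meanPay ς M j)
  set v := ∑ j, τ j * (M j i - meanPay ς M j)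
  have h2 : (a * u + b * v)^2 ≤ a * u^2 + b * v^2 := by nlinarith [mul_nonneg ha hb, sq_nonneg (u - v)]
  have := hς₀ i
  nlinarith

lemma totalUtil_combo_ge {m k : ℕ} (γ : ℝ) (hγ : 0 ≤ γ) (σ τ : Fin m → ℝ) (ς : Fin k → ℝ)
    (M : Fin m → Fin k → ℝ) (hς₀ : ∀ i, 0 ≤ ς i)
    (a b : ℝ) (ha : 0 ≤ a) (hb : 0 ≤ b) (hab : a + b = 1) :
    a * totalUtil γ σ ς M + b * totalUtil γ τ ς M ≤ totalUtil γ (a • σ + b • τ) ς M := by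
  unfold totalUtil
  rw [expUtil_combo]
  have := utilVar_combo_le σ τ ς M hς₀ a b ha hb hab
  nlinarith

theorem bestResponse_convex (n : ℕ) (hn : 1 ≤ n) (M : Fin n → Fin n → ℝ)
    (ς : Fin n → ℝ) (hς₀ : ∀ i, 0 ≤ ς i) (hς₁ : ∑ i, ς i = 1)
    (γ : ℝ) (hγ : 0 ≤ γ) (ε : ℝ) (hε : 0 ≤ ε) (hε' : ε ≤ 1 / (n : ℝ)) :
    Convex ℝ {σ ∈ simplexEps n ε |
      ∀ σ' ∈ simplexEps n ε, totalUtil γ σ' ς M ≤ totalUtil γ σ ς M} := by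
  rintro σ ⟨⟨hσε, hσ1⟩, hσmax⟩ τ ⟨⟨hτε, hτ1⟩, hτmax⟩ a b ha hb hab
  have hmem : a • σ + b • τ ∈ simplexEps n ε := by
    constructor
    · intro i
      have h1 : a * ε ≤ a * σ i := by nlinarith [hσε i]
      have h2 : b * ε ≤ b * τ i := by nlinarith [hτε i]
      simp only [Pi.add_apply, Pi.smul_apply, smul_eq_mul]
      nlinarith
    · simp only [Pi.add_apply, Pi.smul_apply, smul_eq_mul, Finset.sum_add_distrib,
        ← Finset.mul_sum, hσ1, hτ1]
      linarith
  refine ⟨hmem, fun σ' hσ' => ?_⟩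
  have h1 := hσmax σ' hσ'
  have h2 := hτmax σ' hσ'
  have h3 := totalUtil_combo_ge γ hγ σ τ ς M hς₀ a b ha hb hab
  have h4 : totalUtil γ σ' ς M = a * totalUtil γ σ' ς M + b * totalUtil γ σ' ς M := by
    rw [← add_mul, hab, one_mul]
  linarith [mul_le_mul_of_nonneg_left h1 ha, mul_le_mul_of_nonneg_left h2 hb]
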